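/- Let (A₀ⁿ)_{n∈ℕ} and (A₁ⁿ)_{n∈ℕ} be sequences of Banach spaces such that for each n, (A₀ⁿ, A₁ⁿ) is a compatible couple. Let ℓ₁({A₀ⁿ}) be the ℓ₁-direct sum of the A₀ⁿ and ℓ_∞({A₁ⁿ}) the ℓ_∞-direct sum of the A₁ⁿ. Then for all x = (x_i) ∈ ℓ₁({A₀ⁿ}) + ℓ_∞({A₁ⁿ}) and all t > 0, K_t(x; ℓ₁({A₀ⁿ}), ℓ_∞({A₁ⁿ})) = sup { Σ_i K_{t_i}(x_i; A₀ⁱ, A₁ⁱ) : t_i ≥ 0, Σ_i t_i ≤ t }. -/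

import Mathlib

open MeasureTheory ENNReal Set

/-- The Peetre `K_t`-functional of a compatible couple embedded in `V`. -/
noncomputable def Kfun {V A₀ A₁ : Type*} [AddCommGroup V] [Module ℝ V]
    [NormedAddCommGroup A₀] [NormedSpace ℝ A₀] [NormedAddCommGroup A₁] [NormedSpace ℝ A₁]
    (j₀ : A₀ →ₗ[ℝ] V) (j₁ : A₁ →ₗ[ℝ] V) (t : ℝ) (v : V) : ℝ :=
  sInf {r | ∃ (a : A₀) (b : A₁), v = j₀ a + j₁ b ∧ r = ‖a‖ + t * ‖b‖}

section KfunLemmas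

variable {V A₀ A₁ : Type*} [AddCommGroup V] [Module ℝ V]
    [NormedAddCommGroup A₀] [NormedSpace ℝ A₀] [NormedAddCommGroup A₁] [NormedSpace ℝ A₁]
    (j₀ : A₀ →ₗ[ℝ] V) (j₁ : A₁ →ₗ[ℝ] V) (v : V)

lemma Kfun_set_nonneg {t : ℝ} (ht : 0 ≤ t) :
    ∀ r ∈ {r | ∃ (a : A₀) (b : A₁), v = j₀ a + j₁ b ∧ r = ‖a‖ + t * ‖b‖}, 0 ≤ r := by
  rintro r ⟨a, b, -, rfl⟩
  positivity

lemma Kfun_nonneg {t : ℝ} (ht : 0 ≤ t) : 0 ≤ Kfun j₀ j₁ t v :=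
  Real.sInf_nonneg (Kfun_set_nonneg j₀ j₁ v ht)

lemma Kfun_le {t : ℝ} (ht : 0 ≤ t) {a : A₀} {b : A₁} (h : v = j₀ a + j₁ b) :
    Kfun j₀ j₁ t v ≤ ‖a‖ + t * ‖b‖ :=
  csInf_le ⟨0, Kfun_set_nonneg j₀ j₁ v ht⟩ ⟨a, b, h, rfl⟩

lemma Kfun_exists_decomp (hv : ∃ (a : A₀) (b : A₁), v = j₀ a + j₁ b) {t : ℝ}
    {ε : ℝ} (hε : 0 < ε) :
    ∃ (a : A₀) (b : A₁), v = j₀ a + j₁ b ∧ ‖a‖ + t * ‖b‖ < Kfun j₀ j₁ t v + ε := by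
  obtain ⟨a₀, b₀, h⟩ := hv
  obtain ⟨r, ⟨a, b, hab, rfl⟩, hr⟩ :=
    Real.lt_sInf_add_pos (s := {r | ∃ (a : A₀) (b : A₁), v = j₀ a + j₁ b ∧ r = ‖a‖ + t * ‖b‖})
      ⟨_, a₀, b₀, h, rfl⟩ hε
  exact ⟨a, b, hab, hr⟩

lemma Kfun_concave (hv : ∃ (a : A₀) (b : A₁), v = j₀ a + j₁ b)
    {s s' lam mu : ℝ} (hs : 0 ≤ s) (hs' : 0 ≤ s') (hlam : 0 ≤ lam) (hmu : 0 ≤ mu)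
    (hlm : lam + mu = 1) :
    lam * Kfun j₀ j₁ s v + mu * Kfun j₀ j₁ s' v ≤ Kfun j₀ j₁ (lam * s + mu * s') v := by
  apply le_csInf
  · obtain ⟨a, b, h⟩ := hv
    exact ⟨_, a, b, h, rfl⟩
  rintro r ⟨a, b, hab, rfl⟩
  have h1 : Kfun j₀ j₁ s v ≤ ‖a‖ + s * ‖b‖ := Kfun_le j₀ j₁ v hs hab
  have h2 : Kfun j₀ j₁ s' v ≤ ‖a‖ + s' * ‖b‖ := Kfun_le j₀ j₁ v hs' hab
  calc lam * Kfun j₀ j₁ s v + mu * Kfun j₀ j₁ s' v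
      ≤ lam * (‖a‖ + s * ‖b‖) + mu * (‖a‖ + s' * ‖b‖) :=
        add_le_add (mul_le_mul_of_nonneg_left h1 hlam) (mul_le_mul_of_nonneg_left h2 hmu)
    _ = ‖a‖ + (lam * s + mu * s') * ‖b‖ := by linear_combination ‖a‖ * hlm

end KfunLemmas

section Majorant

variable {V A₀ A₁ : Type*} [AddCommGroup V] [Module ℝ V]
    [NormedAddCommGroup A₀] [NormedSpace ℝ A₀] [NormedAddCommGroup A₁] [NormedSpace ℝ A₁]
    (j₀ : A₀ →ₗ[ℝ] V) (j₁ : A₁ →ₗ[ℝ] V) (v : V)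

lemma achievable_convex :
    Convex ℝ {p : ℝ × ℝ | ∃ (a : A₀) (b : A₁), v = j₀ a + j₁ b ∧ ‖a‖ ≤ p.1 ∧ ‖b‖ ≤ p.2} := by
  rintro p ⟨a, b, hab, ha, hb⟩ q ⟨a', b', hab', ha', hb'⟩ lam mu hlam hmu hlm
  refine ⟨lam • a + mu • a', lam • b + mu • b', ?_, ?_, ?_⟩
  · have : v = lam • v + mu • v := by
      rw [← add_smul, hlm, one_smul]
    rw [this]
    nth_rewrite 1 [hab]
    rw [hab']
    simp only [_root_.map_add, _root_.map_smul, smul_add]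
    abel
  · calc ‖lam • a + mu • a'‖ ≤ ‖lam • a‖ + ‖mu • a'‖ := norm_add_le _ _
      _ = lam * ‖a‖ + mu * ‖a'‖ := by
          rw [norm_smul, norm_smul, Real.norm_of_nonneg hlam, Real.norm_of_nonneg hmu]
      _ ≤ lam * p.1 + mu * q.1 := by
          exact add_le_add (mul_le_mul_of_nonneg_left ha hlam) (mul_le_mul_of_nonneg_left ha' hmu)
      _ = (lam • p + mu • q).1 := rfl
  · calc ‖lam • b + mu • b'‖ ≤ ‖lam • b‖ + ‖mu • b'‖ := norm_add_le _ _
      _ = lam * ‖b‖ + mu * ‖b'‖ := by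
          rw [norm_smul, norm_smul, Real.norm_of_nonneg hlam, Real.norm_of_nonneg hmu]
      _ ≤ lam * p.2 + mu * q.2 := by
          exact add_le_add (mul_le_mul_of_nonneg_left hb hlam) (mul_le_mul_of_nonneg_left hb' hmu)
      _ = (lam • p + mu • q).2 := rfl

lemma Kfun_exists_decomp_of_majorant
    (hv : ∃ (a : A₀) (b : A₁), v = j₀ a + j₁ b) {α μ : ℝ}
    (hmaj : ∀ s : ℝ, 0 ≤ s → Kfun j₀ j₁ s v ≤ α + μ * s) {ε : ℝ} (hε : 0 < ε) :
    ∃ (a : A₀) (b : A₁), v = j₀ a + j₁ b ∧ ‖a‖ ≤ α + ε ∧ ‖b‖ ≤ μ + ε := by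
  by_contra hC
  push_neg at hC
  obtain ⟨a₀, b₀, h₀⟩ := hv
  set C : Set (ℝ × ℝ) := {p | ∃ a b, v = j₀ a + j₁ b ∧ ‖a‖ ≤ p.1 ∧ ‖b‖ ≤ p.2} with hCdef
  have hα : 0 ≤ α := le_trans (Kfun_nonneg j₀ j₁ v le_rfl) (by simpa using hmaj 0 le_rfl)
  have hP : ((α + ε/2, μ + ε/2) : ℝ × ℝ) ∉ closure C := by
    intro hmem
    rw [Metric.mem_closure_iff] at hmem
    obtain ⟨y, hy, hdist⟩ := hmem (ε/2) (by positivity)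
    obtain ⟨a, b, hab, ha, hb⟩ := hy
    rw [Prod.dist_eq] at hdist
    have hd1 : dist (α + ε/2) y.1 < ε/2 := lt_of_le_of_lt (le_max_left _ _) hdist
    have hd2 : dist (μ + ε/2) y.2 < ε/2 := lt_of_le_of_lt (le_max_right _ _) hdist
    rw [Real.dist_eq, abs_lt] at hd1 hd2
    exact absurd (hC a b hab (by linarith)) (not_lt.2 (by linarith))
  obtain ⟨f, u, hfu, hfC⟩ := geometric_hahn_banach_point_closed
      ((achievable_convex j₀ j₁ v).closure) isClosed_closure hP
  set p := f (1, 0) with hpdef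
  set q := f (0, 1) with hqdef
  have hf : ∀ z : ℝ × ℝ, f z = z.1 * p + z.2 * q := by
    intro z
    have hz : z = z.1 • ((1:ℝ), (0:ℝ)) + z.2 • ((0:ℝ), (1:ℝ)) := by
      simp [Prod.ext_iff]
    conv_lhs => rw [hz]
    rw [_root_.map_add, _root_.map_smul, _root_.map_smul, smul_eq_mul, smul_eq_mul]
  have hCmem : ∀ (a : A₀) (b : A₁), v = j₀ a + j₁ b → u < ‖a‖ * p + ‖b‖ * q := by
    intro a b hab
    have := hfC (‖a‖, ‖b‖) (subset_closure ⟨a, b, hab, le_rfl, le_rfl⟩)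
    rwa [hf] at this
  have hfP : f ((α + ε/2, μ + ε/2) : ℝ × ℝ) = (α + ε/2) * p + (μ + ε/2) * q := hf _
  have hp : 0 ≤ p := by
    by_contra hp
    push_neg at hp
    set R : ℝ := max ((u - ‖b₀‖ * q - ‖a₀‖ * p) / p) 0 with hRdef
    have hR0 : 0 ≤ R := le_max_right _ _
    have hmem : ((‖a₀‖ + R, ‖b₀‖) : ℝ × ℝ) ∈ C :=
      ⟨a₀, b₀, h₀, by simp [le_add_iff_nonneg_right, hR0], le_rfl⟩
    have h1 := hfC _ (subset_closure hmem)
    rw [hf] at h1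
    have hRp : R * p ≤ ((u - ‖b₀‖ * q - ‖a₀‖ * p) / p) * p :=
      mul_le_mul_of_nonpos_right (le_max_left _ _) hp.le
    have h2 : ((u - ‖b₀‖ * q - ‖a₀‖ * p) / p) * p = u - ‖b₀‖ * q - ‖a₀‖ * p :=
      div_mul_cancel₀ _ hp.ne
    simp only at h1
    nlinarith
  have hq : 0 ≤ q := by
    by_contra hq
    push_neg at hq
    set R : ℝ := max ((u - ‖b₀‖ * q - ‖a₀‖ * p) / q) 0 with hRdef
    have hR0 : 0 ≤ R := le_max_right _ _
    have hmem : ((‖a₀‖, ‖b₀‖ + R) : ℝ × ℝ) ∈ C :=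
      ⟨a₀, b₀, h₀, le_rfl, by simp [le_add_iff_nonneg_right, hR0]⟩
    have h1 := hfC _ (subset_closure hmem)
    rw [hf] at h1
    have hRp : R * q ≤ ((u - ‖b₀‖ * q - ‖a₀‖ * p) / q) * q :=
      mul_le_mul_of_nonpos_right (le_max_left _ _) hq.le
    have h2 : ((u - ‖b₀‖ * q - ‖a₀‖ * p) / q) * q = u - ‖b₀‖ * q - ‖a₀‖ * p :=
      div_mul_cancel₀ _ hq.ne
    simp only at h1
    nlinarith
  rcases eq_or_lt_of_le hp with hp0 | hp0
  · -- p = 0 case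
    have hq0 : 0 < q := by
      rcases eq_or_lt_of_le hq with hq0 | hq0
      · exfalso
        have h1 := hCmem a₀ b₀ h₀
        rw [← hp0, ← hq0] at h1
        rw [hfP, ← hp0, ← hq0] at hfu
        simp at h1 hfu
        linarith
      · exact hq0
    have hball : ∀ (a : A₀) (b : A₁), v = j₀ a + j₁ b → μ + ε/2 ≤ ‖b‖ := by
      intro a b hab
      have h1 := hCmem a b hab
      rw [← hp0] at h1
      rw [hfP, ← hp0] at hfu
      simp only [mul_zero, zero_add] at h1 hfu
      have := hfu.trans h1
      exact le_of_lt (lt_of_mul_lt_mul_right this hq0.le)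
    set s : ℝ := (2 * α + 2) / ε with hsdef
    have hs : 0 ≤ s := by positivity
    have hK : s * (μ + ε/2) ≤ Kfun j₀ j₁ s v := by
      apply le_csInf
      · exact ⟨_, a₀, b₀, h₀, rfl⟩
      rintro r ⟨a, b, hab, rfl⟩
      have h1 := hball a b hab
      nlinarith [norm_nonneg a, mul_le_mul_of_nonneg_left h1 hs]
    have h2 := hK.trans (hmaj s hs)
    have h3 : s * (ε/2) = α + 1 := by
      rw [hsdef]; field_simp
    nlinarith
  · -- p > 0 case
    set s : ℝ := q / p with hsdef
    have hs : 0 ≤ s := div_nonneg hq hp0.le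
    have hsp : s * p = q := div_mul_cancel₀ q hp0.ne'
    have hK : u / p ≤ Kfun j₀ j₁ s v := by
      apply le_csInf
      · exact ⟨_, a₀, b₀, h₀, rfl⟩
      rintro r ⟨a, b, hab, rfl⟩
      rw [div_le_iff₀ hp0]
      have h1 := hCmem a b hab
      have h3 : (‖a‖ + s * ‖b‖) * p = ‖a‖ * p + ‖b‖ * q := by
        linear_combination ‖b‖ * hsp
      linarith
    have h2 := hK.trans (hmaj s hs)
    rw [div_le_iff₀ hp0] at h2
    rw [hfP] at hfu
    have e1 : (α + ε/2) * p + (μ + ε/2) * q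
        = (α + μ * s) * p + (ε/2) * p + (ε/2) * (s * p) := by
      linear_combination (-(μ + ε/2)) * hsp
    have e2 : 0 ≤ (ε/2) * (s * p) := by positivity
    have e3 : 0 < (ε/2) * p := by positivity
    linarith

end Majorant

section Family

variable {V : ℕ → Type*} {A₀ A₁ : ℕ → Type*}
    [∀ n, AddCommGroup (V n)] [∀ n, Module ℝ (V n)]
    [∀ n, NormedAddCommGroup (A₀ n)] [∀ n, NormedSpace ℝ (A₀ n)]
    [∀ n, NormedAddCommGroup (A₁ n)] [∀ n, NormedSpace ℝ (A₁ n)]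
    (j₀ : ∀ n, A₀ n →ₗ[ℝ] V n) (j₁ : ∀ n, A₁ n →ₗ[ℝ] V n) (x : ∀ n, V n)

/-- The right-hand side admissible set, as a function of the parameter `u`. -/
def Tset (u : ℝ) : Set ℝ :=
  {s | ∃ τ : ℕ → ℝ, (∀ i, 0 ≤ τ i) ∧ Summable τ ∧ (∑' i, τ i) ≤ u ∧
      Summable (fun i => Kfun (j₀ i) (j₁ i) (τ i) (x i)) ∧
      s = ∑' i, Kfun (j₀ i) (j₁ i) (τ i) (x i)}

noncomputable def Gfun (u : ℝ) : ℝ := sSup (Tset j₀ j₁ x u)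

variable (a₀ : ∀ n, A₀ n) (b₀ : ∀ n, A₁ n) (D : ℝ)

lemma Kfun_family_ub (hD : ∀ i, ‖b₀ i‖ ≤ D)
    (hx₀ : ∀ i, x i = j₀ i (a₀ i) + j₁ i (b₀ i)) (i : ℕ) {s : ℝ} (hs : 0 ≤ s) :
    Kfun (j₀ i) (j₁ i) s (x i) ≤ ‖a₀ i‖ + s * D := by
  refine (Kfun_le (j₀ i) (j₁ i) (x i) hs (hx₀ i)).trans ?_
  have := mul_le_mul_of_nonneg_left (hD i) hs
  linarith

lemma Kfun_family_summable (ha₀ : Summable fun i => ‖a₀ i‖) (hD : ∀ i, ‖b₀ i‖ ≤ D)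
    (hx₀ : ∀ i, x i = j₀ i (a₀ i) + j₁ i (b₀ i)) {τ : ℕ → ℝ}
    (h0 : ∀ i, 0 ≤ τ i) (hs : Summable τ) :
    Summable (fun i => Kfun (j₀ i) (j₁ i) (τ i) (x i)) :=
  Summable.of_nonneg_of_le (fun i => Kfun_nonneg _ _ _ (h0 i))
    (fun i => Kfun_family_ub j₀ j₁ x a₀ b₀ D hD hx₀ i (h0 i)) (ha₀.add (hs.mul_right D))

lemma Kfun_family_tsum_le (ha₀ : Summable fun i => ‖a₀ i‖) (hD : ∀ i, ‖b₀ i‖ ≤ D)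
    (hx₀ : ∀ i, x i = j₀ i (a₀ i) + j₁ i (b₀ i)) {τ : ℕ → ℝ}
    (h0 : ∀ i, 0 ≤ τ i) (hs : Summable τ) :
    (∑' i, Kfun (j₀ i) (j₁ i) (τ i) (x i)) ≤ (∑' i, ‖a₀ i‖) + (∑' i, τ i) * D := by
  calc (∑' i, Kfun (j₀ i) (j₁ i) (τ i) (x i)) ≤ ∑' i, (‖a₀ i‖ + τ i * D) :=
      Summable.tsum_le_tsum (fun i => Kfun_family_ub j₀ j₁ x a₀ b₀ D hD hx₀ i (h0 i))
        (Kfun_family_summable j₀ j₁ x a₀ b₀ D ha₀ hD hx₀ h0 hs) (ha₀.add (hs.mul_right D))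
    _ = (∑' i, ‖a₀ i‖) + (∑' i, τ i) * D := by
        rw [Summable.tsum_add ha₀ (hs.mul_right D), tsum_mul_right]

lemma Tset_nonempty (ha₀ : Summable fun i => ‖a₀ i‖) (hD : ∀ i, ‖b₀ i‖ ≤ D)
    (hx₀ : ∀ i, x i = j₀ i (a₀ i) + j₁ i (b₀ i)) {u : ℝ} (hu : 0 ≤ u) :
    (Tset j₀ j₁ x u).Nonempty :=
  ⟨∑' i, Kfun (j₀ i) (j₁ i) ((fun _ => (0:ℝ)) i) (x i), (fun _ => (0:ℝ)), fun _ => le_rfl,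
    summable_zero, by simpa using hu,
    Kfun_family_summable j₀ j₁ x a₀ b₀ D ha₀ hD hx₀ (fun _ => le_rfl) summable_zero, rfl⟩

lemma Tset_bddAbove (ha₀ : Summable fun i => ‖a₀ i‖) (hD0 : 0 ≤ D) (hD : ∀ i, ‖b₀ i‖ ≤ D)
    (hx₀ : ∀ i, x i = j₀ i (a₀ i) + j₁ i (b₀ i)) (u : ℝ) :
    BddAbove (Tset j₀ j₁ x u) := by
  rcases le_or_gt 0 u with hu | hu
  · refine ⟨(∑' i, ‖a₀ i‖) + u * D, ?_⟩
    rintro s ⟨τ, h0, hs, hu', hFs, rfl⟩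
    refine (Kfun_family_tsum_le j₀ j₁ x a₀ b₀ D ha₀ hD hx₀ h0 hs).trans ?_
    have := mul_le_mul_of_nonneg_right hu' hD0
    linarith
  · refine ⟨0, ?_⟩
    rintro s ⟨τ, h0, hs, hu', _, rfl⟩
    have h1 : (0:ℝ) ≤ ∑' i, τ i := tsum_nonneg h0
    exact absurd (h1.trans hu') (not_le.2 hu)

lemma Gfun_mono (ha₀ : Summable fun i => ‖a₀ i‖) (hD0 : 0 ≤ D) (hD : ∀ i, ‖b₀ i‖ ≤ D)
    (hx₀ : ∀ i, x i = j₀ i (a₀ i) + j₁ i (b₀ i)) {u w : ℝ} (hu : 0 < u) (huw : u ≤ w) :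
    Gfun j₀ j₁ x u ≤ Gfun j₀ j₁ x w := by
  refine csSup_le_csSup (Tset_bddAbove j₀ j₁ x a₀ b₀ D ha₀ hD0 hD hx₀ w)
    (Tset_nonempty j₀ j₁ x a₀ b₀ D ha₀ hD hx₀ hu.le) ?_
  rintro s ⟨τ, h1, h2, h3, h4, h5⟩
  exact ⟨τ, h1, h2, h3.trans huw, h4, h5⟩

lemma Gfun_concave (ha₀ : Summable fun i => ‖a₀ i‖) (hD0 : 0 ≤ D) (hD : ∀ i, ‖b₀ i‖ ≤ D)
    (hx₀ : ∀ i, x i = j₀ i (a₀ i) + j₁ i (b₀ i)) {t u w lam k2 : ℝ}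
    (hu : 0 < u) (hw : 0 < w) (ht : 0 < t) (hlam : 0 < lam) (hk2 : 0 < k2)
    (hlk : lam + k2 = 1) (hlkt : lam * w + k2 * u = t) :
    lam * Gfun j₀ j₁ x w + k2 * Gfun j₀ j₁ x u ≤ Gfun j₀ j₁ x t := by
  have hdec : ∀ i, ∃ (a : A₀ i) (b : A₁ i), x i = j₀ i a + j₁ i b :=
    fun i => ⟨a₀ i, b₀ i, hx₀ i⟩
  have hstep : ∀ sV ∈ Tset j₀ j₁ x w, ∀ sU ∈ Tset j₀ j₁ x u,
      lam * sV + k2 * sU ≤ Gfun j₀ j₁ x t := by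
    rintro sV ⟨τ, hτ0, hτs, hτu, hFτ, rfl⟩ sU ⟨σ, hσ0, hσs, hσu, hFσ, rfl⟩
    set ρ : ℕ → ℝ := fun i => lam * τ i + k2 * σ i with hρ
    have hρ0 : ∀ i, 0 ≤ ρ i :=
      fun i => add_nonneg (mul_nonneg hlam.le (hτ0 i)) (mul_nonneg hk2.le (hσ0 i))
    have hρs : Summable ρ := (hτs.mul_left lam).add (hσs.mul_left k2)
    have hρsum : (∑' i, ρ i) ≤ t := by
      have e : (∑' i, ρ i) = lam * (∑' i, τ i) + k2 * (∑' i, σ i) := by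
        rw [Summable.tsum_add (hτs.mul_left lam) (hσs.mul_left k2), tsum_mul_left, tsum_mul_left]
      rw [e]
      have e1 := mul_le_mul_of_nonneg_left hτu hlam.le
      have e2 := mul_le_mul_of_nonneg_left hσu hk2.le
      linarith
    have hFρ := Kfun_family_summable j₀ j₁ x a₀ b₀ D ha₀ hD hx₀ hρ0 hρs
    have hle : ∀ i, lam * Kfun (j₀ i) (j₁ i) (τ i) (x i) + k2 * Kfun (j₀ i) (j₁ i) (σ i) (x i)
        ≤ Kfun (j₀ i) (j₁ i) (ρ i) (x i) :=
      fun i => Kfun_concave (j₀ i) (j₁ i) (x i) (hdec i) (hτ0 i) (hσ0 i) hlam.le hk2.le hlk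
    have h4 : lam * (∑' i, Kfun (j₀ i) (j₁ i) (τ i) (x i))
        + k2 * (∑' i, Kfun (j₀ i) (j₁ i) (σ i) (x i))
        ≤ ∑' i, Kfun (j₀ i) (j₁ i) (ρ i) (x i) := by
      rw [← tsum_mul_left, ← tsum_mul_left, ← Summable.tsum_add (hFτ.mul_left lam) (hFσ.mul_left k2)]
      exact Summable.tsum_le_tsum hle ((hFτ.mul_left lam).add (hFσ.mul_left k2)) hFρ
    exact h4.trans (le_csSup (Tset_bddAbove j₀ j₁ x a₀ b₀ D ha₀ hD0 hD hx₀ t)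
      ⟨ρ, hρ0, hρs, hρsum, hFρ, rfl⟩)
  have h1 : ∀ sU ∈ Tset j₀ j₁ x u, lam * Gfun j₀ j₁ x w + k2 * sU ≤ Gfun j₀ j₁ x t := by
    intro sU hsU
    have h2 : Gfun j₀ j₁ x w ≤ (Gfun j₀ j₁ x t - k2 * sU) / lam := by
      refine csSup_le (Tset_nonempty j₀ j₁ x a₀ b₀ D ha₀ hD hx₀ hw.le) ?_
      intro sV hsV
      rw [le_div_iff₀ hlam]
      have := hstep sV hsV sU hsU
      linarith
    rw [le_div_iff₀ hlam] at h2
    linarith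
  have h3 : Gfun j₀ j₁ x u ≤ (Gfun j₀ j₁ x t - lam * Gfun j₀ j₁ x w) / k2 := by
    refine csSup_le (Tset_nonempty j₀ j₁ x a₀ b₀ D ha₀ hD hx₀ hu.le) ?_
    intro sU hsU
    rw [le_div_iff₀ hk2]
    have := h1 sU hsU
    linarith
  rw [le_div_iff₀ hk2] at h3
  linarith

lemma Gfun_exists_slope (ha₀ : Summable fun i => ‖a₀ i‖) (hD0 : 0 ≤ D)
    (hD : ∀ i, ‖b₀ i‖ ≤ D) (hx₀ : ∀ i, x i = j₀ i (a₀ i) + j₁ i (b₀ i))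
    {t : ℝ} (ht : 0 < t) :
    ∃ μ : ℝ, 0 ≤ μ ∧ ∀ w, 0 < w → Gfun j₀ j₁ x w ≤ Gfun j₀ j₁ x t + μ * (w - t) := by
  set Sl : Set ℝ := (fun u => (Gfun j₀ j₁ x t - Gfun j₀ j₁ x u) / (t - u)) '' Ioo 0 t with hSl
  have hSlne : Sl.Nonempty := ⟨_, ⟨t/2, ⟨by positivity, by linarith⟩, rfl⟩⟩
  have hSl0 : ∀ r ∈ Sl, 0 ≤ r := by
    rintro r ⟨w, ⟨hw0, hwt⟩, rfl⟩
    exact div_nonneg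
      (sub_nonneg.2 (Gfun_mono j₀ j₁ x a₀ b₀ D ha₀ hD0 hD hx₀ hw0 hwt.le)) (by linarith)
  have hSlbdd : BddBelow Sl := ⟨0, fun r hr => hSl0 r hr⟩
  refine ⟨sInf Sl, Real.sInf_nonneg hSl0, ?_⟩
  intro w hw
  rcases lt_trichotomy w t with hwt | hwt | hwt
  · have h1 : sInf Sl ≤ (Gfun j₀ j₁ x t - Gfun j₀ j₁ x w) / (t - w) :=
      csInf_le hSlbdd ⟨w, ⟨hw, hwt⟩, rfl⟩
    rw [le_div_iff₀ (by linarith : (0:ℝ) < t - w)] at h1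
    linarith
  · subst hwt; simp
  · have h1 : (Gfun j₀ j₁ x w - Gfun j₀ j₁ x t) / (w - t) ≤ sInf Sl := by
      refine le_csInf hSlne ?_
      rintro r ⟨z, ⟨hz0, hzt⟩, rfl⟩
      rw [div_le_div_iff₀ (by linarith) (by linarith)]
      have hwz : (0:ℝ) < w - z := by linarith
      have hc := Gfun_concave j₀ j₁ x a₀ b₀ D ha₀ hD0 hD hx₀ hz0 hw ht
        (div_pos (by linarith : (0:ℝ) < t - z) hwz)
        (div_pos (by linarith : (0:ℝ) < w - t) hwz)
        (by rw [← add_div, show t - z + (w - t) = w - z by ring]; exact div_self hwz.ne')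
        (by field_simp; try ring)
      have hc2 := mul_le_mul_of_nonneg_left hc hwz.le
      have e : (w - z) * ((t - z)/(w - z) * Gfun j₀ j₁ x w + (w - t)/(w - z) * Gfun j₀ j₁ x z)
          = (t - z) * Gfun j₀ j₁ x w + (w - t) * Gfun j₀ j₁ x z := by
        field_simp
        try ring
      rw [e] at hc2
      linarith
    rw [div_le_iff₀ (by linarith : (0:ℝ) < w - t)] at h1
    linarith

lemma Gfun_keyB (ha₀ : Summable fun i => ‖a₀ i‖) (hD0 : 0 ≤ D)
    (hD : ∀ i, ‖b₀ i‖ ≤ D) (hx₀ : ∀ i, x i = j₀ i (a₀ i) + j₁ i (b₀ i))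
    {t μ : ℝ} (ht : 0 < t) (hμ0 : 0 ≤ μ)
    (hsupp : ∀ w, 0 < w → Gfun j₀ j₁ x w ≤ Gfun j₀ j₁ x t + μ * (w - t))
    {τ : ℕ → ℝ} (hτ0 : ∀ i, 0 ≤ τ i) (hτs : Summable τ) :
    (∑' i, Kfun (j₀ i) (j₁ i) (τ i) (x i)) ≤ Gfun j₀ j₁ x t + μ * ((∑' i, τ i) - t) := by
  apply _root_.le_of_forall_pos_le_add
  intro δ hδ
  have hμ1 : (0:ℝ) < μ + 1 := by linarith
  have hd : (0:ℝ) < δ/(μ+1) := div_pos hδ hμ1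
  have hτnn : 0 ≤ ∑' i, τ i := tsum_nonneg hτ0
  have hub : (0:ℝ) < (∑' i, τ i) + δ/(μ+1) := by linarith
  have h1 : (∑' i, Kfun (j₀ i) (j₁ i) (τ i) (x i)) ≤ Gfun j₀ j₁ x ((∑' i, τ i) + δ/(μ+1)) :=
    le_csSup (Tset_bddAbove j₀ j₁ x a₀ b₀ D ha₀ hD0 hD hx₀ _)
      ⟨τ, hτ0, hτs, by linarith, Kfun_family_summable j₀ j₁ x a₀ b₀ D ha₀ hD hx₀ hτ0 hτs, rfl⟩
  have h2 := hsupp _ hub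
  have h3 : μ * (δ/(μ+1)) ≤ δ := by
    have e1 : μ * (δ/(μ+1)) ≤ (μ+1) * (δ/(μ+1)) :=
      mul_le_mul_of_nonneg_right (by linarith) hd.le
    have e2 : (μ+1) * (δ/(μ+1)) = δ := by field_simp
    linarith
  have e : μ * ((∑' i, τ i) + δ/(μ+1) - t) = μ * ((∑' i, τ i) - t) + μ * (δ/(μ+1)) := by ring
  linarith

end Family

section Assemble

variable {V : ℕ → Type*} {A₀ A₁ : ℕ → Type*}
    [∀ n, AddCommGroup (V n)] [∀ n, Module ℝ (V n)]
    [∀ n, NormedAddCommGroup (A₀ n)] [∀ n, NormedSpace ℝ (A₀ n)]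
    [∀ n, NormedAddCommGroup (A₁ n)] [∀ n, NormedSpace ℝ (A₁ n)]
    (j₀ : ∀ n, A₀ n →ₗ[ℝ] V n) (j₁ : ∀ n, A₁ n →ₗ[ℝ] V n) (x : ∀ n, V n)

/-- `A i = sup_{s ≥ 0} (K(s, x_i) - μ s)`. -/
noncomputable def Afun (μ : ℝ) (i : ℕ) : ℝ :=
  sSup ((fun s => Kfun (j₀ i) (j₁ i) s (x i) - μ * s) '' Ici 0)

variable (a₀ : ∀ n, A₀ n) (b₀ : ∀ n, A₁ n) (D : ℝ)

lemma Afun_single_ub (ha₀ : Summable fun i => ‖a₀ i‖) (hD0 : 0 ≤ D)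
    (hD : ∀ i, ‖b₀ i‖ ≤ D) (hx₀ : ∀ i, x i = j₀ i (a₀ i) + j₁ i (b₀ i))
    {t μ : ℝ} (ht : 0 < t) (hμ0 : 0 ≤ μ)
    (hsupp : ∀ w, 0 < w → Gfun j₀ j₁ x w ≤ Gfun j₀ j₁ x t + μ * (w - t))
    (i : ℕ) {s : ℝ} (hs : 0 ≤ s) :
    Kfun (j₀ i) (j₁ i) s (x i) - μ * s ≤ Gfun j₀ j₁ x t - μ * t := by
  classical
  have hτ0 : ∀ j, 0 ≤ (fun j => if j = i then s else 0) j := by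
    intro j; by_cases h : j = i <;> simp [h, hs]
  have hτs : Summable (fun j => if j = i then s else 0) :=
    summable_of_ne_finset_zero (s := {i}) (by intro j hj; simp at hj; simp [hj])
  have h1 := Gfun_keyB j₀ j₁ x a₀ b₀ D ha₀ hD0 hD hx₀ ht hμ0 hsupp hτ0 hτs
  simp only [tsum_ite_eq] at h1
  have h2 : Kfun (j₀ i) (j₁ i) s (x i)
      ≤ ∑' j, Kfun (j₀ j) (j₁ j) (if j = i then s else 0) (x j) := by
    have h3 := Summable.le_tsum (Kfun_family_summable j₀ j₁ x a₀ b₀ D ha₀ hD hx₀ hτ0 hτs) i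
      (fun j _ => Kfun_nonneg _ _ _ (hτ0 j))
    simpa using h3
  have e : μ * (s - t) = μ * s - μ * t := by ring
  linarith

lemma Afun_bddAbove (ha₀ : Summable fun i => ‖a₀ i‖) (hD0 : 0 ≤ D)
    (hD : ∀ i, ‖b₀ i‖ ≤ D) (hx₀ : ∀ i, x i = j₀ i (a₀ i) + j₁ i (b₀ i))
    {t μ : ℝ} (ht : 0 < t) (hμ0 : 0 ≤ μ)
    (hsupp : ∀ w, 0 < w → Gfun j₀ j₁ x w ≤ Gfun j₀ j₁ x t + μ * (w - t)) (i : ℕ) :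
    BddAbove ((fun s => Kfun (j₀ i) (j₁ i) s (x i) - μ * s) '' Ici 0) := by
  refine ⟨Gfun j₀ j₁ x t - μ * t, ?_⟩
  rintro r ⟨s, hs, rfl⟩
  exact Afun_single_ub j₀ j₁ x a₀ b₀ D ha₀ hD0 hD hx₀ ht hμ0 hsupp i hs

lemma Afun_maj (ha₀ : Summable fun i => ‖a₀ i‖) (hD0 : 0 ≤ D)
    (hD : ∀ i, ‖b₀ i‖ ≤ D) (hx₀ : ∀ i, x i = j₀ i (a₀ i) + j₁ i (b₀ i))
    {t μ : ℝ} (ht : 0 < t) (hμ0 : 0 ≤ μ)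
    (hsupp : ∀ w, 0 < w → Gfun j₀ j₁ x w ≤ Gfun j₀ j₁ x t + μ * (w - t))
    (i : ℕ) {s : ℝ} (hs : 0 ≤ s) :
    Kfun (j₀ i) (j₁ i) s (x i) ≤ Afun j₀ j₁ x μ i + μ * s := by
  have h1 := le_csSup (Afun_bddAbove j₀ j₁ x a₀ b₀ D ha₀ hD0 hD hx₀ ht hμ0 hsupp i)
    (⟨s, hs, rfl⟩ : Kfun (j₀ i) (j₁ i) s (x i) - μ * s
      ∈ (fun s => Kfun (j₀ i) (j₁ i) s (x i) - μ * s) '' Ici 0)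
  rw [Afun]
  linarith

lemma Afun_nonneg (ha₀ : Summable fun i => ‖a₀ i‖) (hD0 : 0 ≤ D)
    (hD : ∀ i, ‖b₀ i‖ ≤ D) (hx₀ : ∀ i, x i = j₀ i (a₀ i) + j₁ i (b₀ i))
    {t μ : ℝ} (ht : 0 < t) (hμ0 : 0 ≤ μ)
    (hsupp : ∀ w, 0 < w → Gfun j₀ j₁ x w ≤ Gfun j₀ j₁ x t + μ * (w - t)) (i : ℕ) :
    0 ≤ Afun j₀ j₁ x μ i := by
  have h1 := le_csSup (Afun_bddAbove j₀ j₁ x a₀ b₀ D ha₀ hD0 hD hx₀ ht hμ0 hsupp i)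
    (⟨0, self_mem_Ici, rfl⟩ : Kfun (j₀ i) (j₁ i) 0 (x i) - μ * 0
      ∈ (fun s => Kfun (j₀ i) (j₁ i) s (x i) - μ * s) '' Ici 0)
  have h2 := Kfun_nonneg (j₀ i) (j₁ i) (x i) (le_refl (0:ℝ))
  rw [Afun]
  linarith

lemma Afun_sum_le (ha₀ : Summable fun i => ‖a₀ i‖) (hD0 : 0 ≤ D)
    (hD : ∀ i, ‖b₀ i‖ ≤ D) (hx₀ : ∀ i, x i = j₀ i (a₀ i) + j₁ i (b₀ i))
    {t μ : ℝ} (ht : 0 < t) (hμ0 : 0 ≤ μ)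
    (hsupp : ∀ w, 0 < w → Gfun j₀ j₁ x w ≤ Gfun j₀ j₁ x t + μ * (w - t))
    (I : Finset ℕ) :
    (∑ i ∈ I, Afun j₀ j₁ x μ i) ≤ Gfun j₀ j₁ x t - μ * t := by
  classical
  apply _root_.le_of_forall_pos_le_add
  intro δ hδ
  have hcard : (0:ℝ) < I.card + 1 := by positivity
  have hδ'0 : 0 < δ / (I.card + 1) := div_pos hδ hcard
  have hch : ∀ i, ∃ s, 0 ≤ s ∧
      Afun j₀ j₁ x μ i - δ / (I.card + 1) < Kfun (j₀ i) (j₁ i) s (x i) - μ * s := by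
    intro i
    obtain ⟨r, ⟨s, hs, rfl⟩, hr⟩ := exists_lt_of_lt_csSup
      (⟨_, ⟨0, self_mem_Ici, rfl⟩⟩ :
        ((fun s => Kfun (j₀ i) (j₁ i) s (x i) - μ * s) '' Ici 0).Nonempty)
      (show Afun j₀ j₁ x μ i - δ / (I.card + 1) < Afun j₀ j₁ x μ i by
        rw [Afun]; exact sub_lt_self _ hδ'0)
    exact ⟨s, hs, hr⟩
  choose sfn hs0 hsA using hch
  have hτ0 : ∀ j, 0 ≤ (fun j => if j ∈ I then sfn j else 0) j := by
    intro j; by_cases h : j ∈ I <;> simp [h, hs0 j]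
  have hτs : Summable (fun j => if j ∈ I then sfn j else 0) :=
    summable_of_ne_finset_zero (s := I) (fun j hj => if_neg hj)
  have hτsum : (∑' j, if j ∈ I then sfn j else 0) = ∑ i ∈ I, sfn i := by
    rw [tsum_eq_sum (s := I) (fun j hj => if_neg hj)]
    exact Finset.sum_congr rfl (fun j hj => if_pos hj)
  have h1 := Gfun_keyB j₀ j₁ x a₀ b₀ D ha₀ hD0 hD hx₀ ht hμ0 hsupp hτ0 hτs
  rw [hτsum] at h1
  have h2 : (∑ i ∈ I, Kfun (j₀ i) (j₁ i) (sfn i) (x i))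
      ≤ ∑' j, Kfun (j₀ j) (j₁ j) (if j ∈ I then sfn j else 0) (x j) := by
    have h3 := Summable.sum_le_tsum I (fun j _ => Kfun_nonneg _ _ _ (hτ0 j))
      (Kfun_family_summable j₀ j₁ x a₀ b₀ D ha₀ hD hx₀ hτ0 hτs)
    refine le_trans (le_of_eq ?_) h3
    exact Finset.sum_congr rfl (fun j hj => by simp [hj])
  have h3 : (∑ i ∈ I, (Afun j₀ j₁ x μ i - δ / (I.card + 1)))
      ≤ ∑ i ∈ I, (Kfun (j₀ i) (j₁ i) (sfn i) (x i) - μ * sfn i) :=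
    Finset.sum_le_sum (fun i _ => (hsA i).le)
  rw [Finset.sum_sub_distrib, Finset.sum_sub_distrib, Finset.sum_const, nsmul_eq_mul,
    ← Finset.mul_sum] at h3
  have h4 : (I.card : ℝ) * (δ / (I.card + 1)) ≤ δ := by
    calc (I.card:ℝ) * (δ/(I.card+1)) = δ * I.card / (I.card+1) := by ring
      _ ≤ δ := by
          rw [div_le_iff₀ hcard]
          nlinarith [hδ.le]
  have e : μ * ((∑ i ∈ I, sfn i) - t) = μ * (∑ i ∈ I, sfn i) - μ * t := by ring
  linarith

lemma Afun_summable (ha₀ : Summable fun i => ‖a₀ i‖) (hD0 : 0 ≤ D)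
    (hD : ∀ i, ‖b₀ i‖ ≤ D) (hx₀ : ∀ i, x i = j₀ i (a₀ i) + j₁ i (b₀ i))
    {t μ : ℝ} (ht : 0 < t) (hμ0 : 0 ≤ μ)
    (hsupp : ∀ w, 0 < w → Gfun j₀ j₁ x w ≤ Gfun j₀ j₁ x t + μ * (w - t)) :
    Summable (Afun j₀ j₁ x μ) :=
  summable_of_sum_range_le (Afun_nonneg j₀ j₁ x a₀ b₀ D ha₀ hD0 hD hx₀ ht hμ0 hsupp)
    (fun n => Afun_sum_le j₀ j₁ x a₀ b₀ D ha₀ hD0 hD hx₀ ht hμ0 hsupp (Finset.range n))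

lemma Afun_tsum_le (ha₀ : Summable fun i => ‖a₀ i‖) (hD0 : 0 ≤ D)
    (hD : ∀ i, ‖b₀ i‖ ≤ D) (hx₀ : ∀ i, x i = j₀ i (a₀ i) + j₁ i (b₀ i))
    {t μ : ℝ} (ht : 0 < t) (hμ0 : 0 ≤ μ)
    (hsupp : ∀ w, 0 < w → Gfun j₀ j₁ x w ≤ Gfun j₀ j₁ x t + μ * (w - t)) :
    (∑' i, Afun j₀ j₁ x μ i) ≤ Gfun j₀ j₁ x t - μ * t :=
  Summable.tsum_le_of_sum_le (Afun_summable j₀ j₁ x a₀ b₀ D ha₀ hD0 hD hx₀ ht hμ0 hsupp)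
    (fun I => Afun_sum_le j₀ j₁ x a₀ b₀ D ha₀ hD0 hD hx₀ ht hμ0 hsupp I)

end Assemble

section Main

variable {V : ℕ → Type*} {A₀ A₁ : ℕ → Type*}
    [∀ n, AddCommGroup (V n)] [∀ n, Module ℝ (V n)]
    [∀ n, NormedAddCommGroup (A₀ n)] [∀ n, NormedSpace ℝ (A₀ n)]
    [∀ n, NormedAddCommGroup (A₁ n)] [∀ n, NormedSpace ℝ (A₁ n)]
    (j₀ : ∀ n, A₀ n →ₗ[ℝ] V n) (j₁ : ∀ n, A₁ n →ₗ[ℝ] V n) (x : ∀ n, V n)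

lemma Kl1linf_hard (a₀ : ∀ n, A₀ n) (b₀ : ∀ n, A₁ n)
    (ha₀ : Summable fun i => ‖a₀ i‖) (hb₀ : BddAbove (Set.range fun i => ‖b₀ i‖))
    (hx₀ : ∀ i, x i = j₀ i (a₀ i) + j₁ i (b₀ i)) {t : ℝ} (ht : 0 < t) :
    sInf {r | ∃ (a : ∀ n, A₀ n) (b : ∀ n, A₁ n), Summable (fun i => ‖a i‖) ∧
        BddAbove (Set.range fun i => ‖b i‖) ∧ (∀ i, x i = j₀ i (a i) + j₁ i (b i)) ∧
        r = (∑' i, ‖a i‖) + t * (⨆ i, ‖b i‖)} ≤ Gfun j₀ j₁ x t := by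
  obtain ⟨D, hD'⟩ := hb₀
  have hD : ∀ i, ‖b₀ i‖ ≤ D := fun i => hD' ⟨i, rfl⟩
  have hD0 : (0:ℝ) ≤ D := (norm_nonneg _).trans (hD 0)
  have hdec : ∀ i, ∃ (a : A₀ i) (b : A₁ i), x i = j₀ i a + j₁ i b :=
    fun i => ⟨a₀ i, b₀ i, hx₀ i⟩
  obtain ⟨μ, hμ0, hsupp⟩ := Gfun_exists_slope j₀ j₁ x a₀ b₀ D ha₀ hD0 hD hx₀ ht
  apply _root_.le_of_forall_pos_le_add
  intro ε hε
  have hδ0p : 0 < ε / (3 + t) := div_pos hε (by linarith)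
  have hchoice : ∀ i, ∃ (a : A₀ i) (b : A₁ i), x i = j₀ i a + j₁ i b ∧
      ‖a‖ ≤ Afun j₀ j₁ x μ i + (ε / (3 + t)) * (1/2)^i ∧
      ‖b‖ ≤ μ + (ε / (3 + t)) * (1/2)^i := by
    intro i
    exact Kfun_exists_decomp_of_majorant (j₀ i) (j₁ i) (x i) (hdec i)
      (fun s hs => Afun_maj j₀ j₁ x a₀ b₀ D ha₀ hD0 hD hx₀ ht hμ0 hsupp i hs)
      (mul_pos hδ0p (by positivity))
  choose av bv habv hna hnb using hchoice
  have hAsum := Afun_summable j₀ j₁ x a₀ b₀ D ha₀ hD0 hD hx₀ ht hμ0 hsupp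
  have hAtsum := Afun_tsum_le j₀ j₁ x a₀ b₀ D ha₀ hD0 hD hx₀ ht hμ0 hsupp
  have hgeo : Summable (fun i : ℕ => (ε / (3 + t)) * (1/2)^i) :=
    summable_geometric_two.mul_left _
  have hasum : Summable (fun i => ‖av i‖) :=
    Summable.of_nonneg_of_le (fun i => norm_nonneg _) hna (hAsum.add hgeo)
  have hbB : BddAbove (Set.range fun i => ‖bv i‖) := by
    refine ⟨μ + ε / (3 + t), ?_⟩
    rintro y ⟨i, rfl⟩
    have hp : (1/2:ℝ)^i ≤ 1 := pow_le_one₀ (by norm_num) (by norm_num)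
    have h5 := mul_le_mul_of_nonneg_left hp hδ0p.le
    have h6 := hnb i
    simp only [mul_one] at h5
    exact h6.trans (by linarith)
  have hmem : (∑' i, ‖av i‖) + t * (⨆ i, ‖bv i‖) ∈
      {r | ∃ (a : ∀ n, A₀ n) (b : ∀ n, A₁ n), Summable (fun i => ‖a i‖) ∧
      BddAbove (Set.range fun i => ‖b i‖) ∧ (∀ i, x i = j₀ i (a i) + j₁ i (b i)) ∧
      r = (∑' i, ‖a i‖) + t * (⨆ i, ‖b i‖)} := ⟨av, bv, hasum, hbB, habv, rfl⟩
  have hlow : BddBelow {r | ∃ (a : ∀ n, A₀ n) (b : ∀ n, A₁ n), Summable (fun i => ‖a i‖) ∧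
      BddAbove (Set.range fun i => ‖b i‖) ∧ (∀ i, x i = j₀ i (a i) + j₁ i (b i)) ∧
      r = (∑' i, ‖a i‖) + t * (⨆ i, ‖b i‖)} := by
    refine ⟨0, ?_⟩
    rintro r ⟨a, b, ha, hb, hxab, rfl⟩
    have h5 : (0:ℝ) ≤ ∑' i, ‖a i‖ := tsum_nonneg (fun i => norm_nonneg _)
    have h6 : (0:ℝ) ≤ ⨆ i, ‖b i‖ := (norm_nonneg (b 0)).trans (le_ciSup hb 0)
    have h7 : (0:ℝ) ≤ t * ⨆ i, ‖b i‖ := mul_nonneg ht.le h6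
    linarith
  refine (csInf_le hlow hmem).trans ?_
  have h5 : (∑' i, ‖av i‖) ≤ (∑' i, Afun j₀ j₁ x μ i) + (ε / (3 + t)) * 2 := by
    calc (∑' i, ‖av i‖) ≤ ∑' i, (Afun j₀ j₁ x μ i + (ε / (3 + t)) * (1/2)^i) :=
        Summable.tsum_le_tsum hna hasum (hAsum.add hgeo)
      _ = (∑' i, Afun j₀ j₁ x μ i) + (ε / (3 + t)) * 2 := by
          rw [Summable.tsum_add hAsum hgeo, tsum_mul_left, tsum_geometric_two]
  have h6 : (⨆ i, ‖bv i‖) ≤ μ + ε / (3 + t) := by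
    refine ciSup_le fun i => ?_
    have hp : (1/2:ℝ)^i ≤ 1 := pow_le_one₀ (by norm_num) (by norm_num)
    have h7 := mul_le_mul_of_nonneg_left hp hδ0p.le
    simp only [mul_one] at h7
    exact (hnb i).trans (by linarith)
  have h7 : t * (⨆ i, ‖bv i‖) ≤ t * (μ + ε / (3 + t)) :=
    mul_le_mul_of_nonneg_left h6 ht.le
  have h8 : (2 + t) * (ε / (3 + t)) ≤ ε := by
    calc (2+t) * (ε/(3+t)) = ε * (2+t)/(3+t) := by ring
      _ ≤ ε := by
          rw [div_le_iff₀ (by linarith : (0:ℝ) < 3 + t)]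
          nlinarith [hε.le, ht.le]
  have e9 : t * (μ + ε / (3 + t)) = t * μ + t * (ε / (3 + t)) := by ring
  linarith

end Main

/-- Remark 4: the formula for the `K_t`-functional of the couple
`(ℓ₁({A₀ⁿ}), ℓ_∞({A₁ⁿ}))` of direct sums of families of Banach spaces. -/
theorem Kl1linf_family_eq_KsupSum
    {V : ℕ → Type*} {A₀ A₁ : ℕ → Type*}
    [∀ n, AddCommGroup (V n)] [∀ n, Module ℝ (V n)] [∀ n, TopologicalSpace (V n)]
    [∀ n, IsTopologicalAddGroup (V n)] [∀ n, ContinuousSMul ℝ (V n)] [∀ n, T2Space (V n)]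
    [∀ n, NormedAddCommGroup (A₀ n)] [∀ n, NormedSpace ℝ (A₀ n)] [∀ n, CompleteSpace (A₀ n)]
    [∀ n, NormedAddCommGroup (A₁ n)] [∀ n, NormedSpace ℝ (A₁ n)] [∀ n, CompleteSpace (A₁ n)]
    (j₀ : ∀ n, A₀ n →ₗ[ℝ] V n) (j₁ : ∀ n, A₁ n →ₗ[ℝ] V n)
    (hc₀ : ∀ n, Continuous (j₀ n)) (hc₁ : ∀ n, Continuous (j₁ n))
    (hi₀ : ∀ n, Function.Injective (j₀ n)) (hi₁ : ∀ n, Function.Injective (j₁ n))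
    (x : ∀ n, V n)
    -- `x ∈ ℓ₁({A₀ⁿ}) + ℓ_∞({A₁ⁿ})`:
    (hx : ∃ (a : ∀ n, A₀ n) (b : ∀ n, A₁ n), Summable (fun i => ‖a i‖) ∧
        BddAbove (Set.range fun i => ‖b i‖) ∧ ∀ i, x i = j₀ i (a i) + j₁ i (b i))
    (t : ℝ) (ht : 0 < t) :
    sInf {r | ∃ (a : ∀ n, A₀ n) (b : ∀ n, A₁ n), Summable (fun i => ‖a i‖) ∧
        BddAbove (Set.range fun i => ‖b i‖) ∧ (∀ i, x i = j₀ i (a i) + j₁ i (b i)) ∧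
        r = (∑' i, ‖a i‖) + t * (⨆ i, ‖b i‖)} =
    sSup {s | ∃ τ : ℕ → ℝ, (∀ i, 0 ≤ τ i) ∧ Summable τ ∧ (∑' i, τ i) ≤ t ∧
        Summable (fun i => Kfun (j₀ i) (j₁ i) (τ i) (x i)) ∧
        s = ∑' i, Kfun (j₀ i) (j₁ i) (τ i) (x i)} := by
  obtain ⟨a₀, b₀, ha₀, hb₀, hx₀⟩ := hx
  obtain ⟨D, hD'⟩ := id hb₀
  have hD : ∀ i, ‖b₀ i‖ ≤ D := fun i => hD' ⟨i, rfl⟩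
  have hD0 : (0:ℝ) ≤ D := (norm_nonneg _).trans (hD 0)
  apply le_antisymm
  · exact Kl1linf_hard j₀ j₁ x a₀ b₀ ha₀ hb₀ hx₀ ht
  · refine csSup_le (Tset_nonempty j₀ j₁ x a₀ b₀ D ha₀ hD hx₀ ht.le) ?_
    rintro s ⟨τ, hτ0, hτs, hτt, hFs, rfl⟩
    refine le_csInf ⟨_, a₀, b₀, ha₀, hb₀, hx₀, rfl⟩ ?_
    rintro r ⟨a, b, ha, hb, hxab, rfl⟩
    have hB : ∀ i, ‖b i‖ ≤ ⨆ i, ‖b i‖ := fun i => le_ciSup hb i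
    have hB0 : (0:ℝ) ≤ ⨆ i, ‖b i‖ := (norm_nonneg (b 0)).trans (hB 0)
    have hsum2 : Summable (fun i => ‖a i‖ + τ i * ⨆ i, ‖b i‖) :=
      ha.add (hτs.mul_right _)
    have hstep1 : (∑' i, Kfun (j₀ i) (j₁ i) (τ i) (x i))
        ≤ ∑' i, (‖a i‖ + τ i * ⨆ i, ‖b i‖) := by
      refine Summable.tsum_le_tsum (fun i => ?_) hFs hsum2
      have h1 := Kfun_le (j₀ i) (j₁ i) (x i) (hτ0 i) (hxab i)
      have h2 := mul_le_mul_of_nonneg_left (hB i) (hτ0 i)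
      linarith
    have hstep2 : (∑' i, (‖a i‖ + τ i * ⨆ i, ‖b i‖))
        = (∑' i, ‖a i‖) + (∑' i, τ i) * ⨆ i, ‖b i‖ := by
      rw [Summable.tsum_add ha (hτs.mul_right _), tsum_mul_right]
    have hstep3 := mul_le_mul_of_nonneg_right hτt hB0
    calc (∑' i, Kfun (j₀ i) (j₁ i) (τ i) (x i))
        ≤ (∑' i, ‖a i‖) + (∑' i, τ i) * ⨆ i, ‖b i‖ := by rw [← hstep2]; exact hstep1
      _ ≤ (∑' i, ‖a i‖) + t * ⨆ i, ‖b i‖ := by linarith
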